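/- Let A₀ be a unital algebra not equal to the linear span of its square-zero elements, and let C = F[X]/(Xⁿ) with n ≥ 2. Then the algebra A = A₀ ⊗ C is not 2-zpd. -/

import Mathlib

set_option maxHeartbeats 1000000
set_option synthInstance.maxHeartbeats 400000


def IsZpd (F A : Type*) [Field F] [Ring A] [Algebra F A] : Prop :=
  ∀ φ : A →ₗ[F] A →ₗ[F] F, (∀ x y : A, x * y = 0 → φ x y = 0) →
    ∃ τ : A →ₗ[F] F, ∀ x y : A, φ x y = τ (x * y)

def Is2Zpd (F A : Type*) [Field F] [Ring A] [Algebra F A] : Prop :=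
  ∀ φ : A →ₗ[F] A →ₗ[F] F, (∀ x y : A, x * y = 0 → y * x = 0 → φ x y = 0) →
    ∃ τ₁ τ₂ : A →ₗ[F] F, ∀ x y : A, φ x y = τ₁ (x * y) + τ₂ (y * x)

def IsZLpd (F A : Type*) [Field F] [Ring A] [Algebra F A] : Prop :=
  ∀ φ : A →ₗ[F] A →ₗ[F] F, (∀ x y : A, x * y = y * x → φ x y = 0) →
    ∃ τ : A →ₗ[F] F, ∀ x y : A, φ x y = τ (x * y - y * x)

namespace TensorNilpotentAux

open Polynomial TensorProduct

variable (F : Type*) [Field F]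

/-- The `k`-th coefficient functional on `F[X]/(X^n)`, for `k < n`. -/
noncomputable def coeffQ (n k : ℕ) (hk : k < n) :
    (Polynomial F ⧸ Ideal.span {(X : Polynomial F) ^ n}) →ₗ[F] F :=
  (Submodule.liftQ ((Ideal.span {(X : Polynomial F) ^ n}).restrictScalars F)
    (lcoeff F k) (by
      intro p hp
      rw [Submodule.restrictScalars_mem, Ideal.mem_span_singleton] at hp
      obtain ⟨g, rfl⟩ := hp
      have : (X ^ n * g).coeff k = 0 := by
        rw [mul_comm, coeff_mul_X_pow', if_neg (by omega)]
      simpa [lcoeff_apply] using this)) ∘ₗ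
  (Submodule.Quotient.restrictScalarsEquiv F
    ((Ideal.span {(X : Polynomial F) ^ n}) : Submodule (Polynomial F) (Polynomial F))).symm.toLinearMap

lemma coeffQ_mk (n k : ℕ) (hk : k < n) (p : Polynomial F) :
    coeffQ F n k hk (Ideal.Quotient.mk (Ideal.span {(X : Polynomial F) ^ n}) p) = p.coeff k := by
  rw [coeffQ, LinearMap.comp_apply, ← Ideal.Quotient.mk_eq_mk, LinearEquiv.coe_toLinearMap,
    Submodule.Quotient.restrictScalarsEquiv_symm_mk, Submodule.liftQ_apply, lcoeff_apply]

lemma coeffQ_mul_zero (n : ℕ) (h0 : 0 < n)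
    (p q : Polynomial F ⧸ Ideal.span {(X : Polynomial F) ^ n}) :
    coeffQ F n 0 h0 (p * q) = coeffQ F n 0 h0 p * coeffQ F n 0 h0 q := by
  obtain ⟨p, rfl⟩ := Ideal.Quotient.mk_surjective p
  obtain ⟨q, rfl⟩ := Ideal.Quotient.mk_surjective q
  rw [← map_mul, coeffQ_mk, coeffQ_mk, coeffQ_mk, Polynomial.mul_coeff_zero]

lemma coeffQ_mul_one (n : ℕ) (h0 : 0 < n) (h1 : 1 < n)
    (p q : Polynomial F ⧸ Ideal.span {(X : Polynomial F) ^ n}) :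
    coeffQ F n 1 h1 (p * q) =
      coeffQ F n 0 h0 p * coeffQ F n 1 h1 q + coeffQ F n 1 h1 p * coeffQ F n 0 h0 q := by
  obtain ⟨p, rfl⟩ := Ideal.Quotient.mk_surjective p
  obtain ⟨q, rfl⟩ := Ideal.Quotient.mk_surjective q
  rw [← map_mul, coeffQ_mk, coeffQ_mk, coeffQ_mk, coeffQ_mk, coeffQ_mk, Polynomial.coeff_mul]
  rw [show (Finset.HasAntidiagonal.antidiagonal 1 : Finset (ℕ × ℕ)) = {(0,1),(1,0)} from by decide]
  simp

variable (A₀ : Type*) [Ring A₀] [Algebra F A₀]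

-- Helper lemmas for ring operations on the tensor product, stated with the instances
-- as they are elaborated by default.
lemma tmul_add (x y z : A₀ ⊗[F] (Polynomial F ⧸ Ideal.span {(X : Polynomial F) ^ n})) :
    x * (y + z) = x * y + x * z := by
  have h := @mul_add (A₀ ⊗[F] (Polynomial F ⧸ Ideal.span {(X : Polynomial F) ^ n})) _ _
    (Distrib.leftDistribClass _) x y z
  exact h

lemma tadd_mul (x y z : A₀ ⊗[F] (Polynomial F ⧸ Ideal.span {(X : Polynomial F) ^ n})) :
    (x + y) * z = x * z + y * z := by
  have h := @add_mul (A₀ ⊗[F] (Polynomial F ⧸ Ideal.span {(X : Polynomial F) ^ n})) _ _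
    (Distrib.rightDistribClass _) x y z
  exact h

lemma tzero_mul (x : A₀ ⊗[F] (Polynomial F ⧸ Ideal.span {(X : Polynomial F) ^ n})) :
    0 * x = 0 := by
  have h := zero_mul (M₀ := A₀ ⊗[F] (Polynomial F ⧸ Ideal.span {(X : Polynomial F) ^ n})) x
  exact h

lemma tmul_zero (x : A₀ ⊗[F] (Polynomial F ⧸ Ideal.span {(X : Polynomial F) ^ n})) :
    x * 0 = 0 := by
  have h := mul_zero (M₀ := A₀ ⊗[F] (Polynomial F ⧸ Ideal.span {(X : Polynomial F) ^ n})) x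
  exact h

lemma tone_mul (x : A₀ ⊗[F] (Polynomial F ⧸ Ideal.span {(X : Polynomial F) ^ n})) :
    1 * x = x := by
  have h := one_mul (M := A₀ ⊗[F] (Polynomial F ⧸ Ideal.span {(X : Polynomial F) ^ n})) x
  exact h

lemma tmul_one (x : A₀ ⊗[F] (Polynomial F ⧸ Ideal.span {(X : Polynomial F) ^ n})) :
    x * 1 = x := by
  have h := mul_one (M := A₀ ⊗[F] (Polynomial F ⧸ Ideal.span {(X : Polynomial F) ^ n})) x
  exact h

/-- Extraction of the `k`-th coefficient of an element of `A₀ ⊗ F[X]/(X^n)`. -/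
noncomputable def Ecoef (n k : ℕ) (hk : k < n) :
    (A₀ ⊗[F] (Polynomial F ⧸ Ideal.span {(X : Polynomial F) ^ n})) →ₗ[F] A₀ :=
  (TensorProduct.rid F A₀).toLinearMap ∘ₗ LinearMap.lTensor A₀ (coeffQ F n k hk)

lemma Ecoef_tmul (n k : ℕ) (hk : k < n) (a : A₀)
    (p : Polynomial F ⧸ Ideal.span {(X : Polynomial F) ^ n}) :
    Ecoef F A₀ n k hk (a ⊗ₜ[F] p) = coeffQ F n k hk p • a := by
  rw [Ecoef, LinearMap.comp_apply, LinearMap.lTensor_tmul, LinearEquiv.coe_toLinearMap,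
    TensorProduct.rid_tmul]

lemma Ecoef_zero_mul (n : ℕ) (h0 : 0 < n)
    (x y : A₀ ⊗[F] (Polynomial F ⧸ Ideal.span {(X : Polynomial F) ^ n})) :
    Ecoef F A₀ n 0 h0 (x * y) = Ecoef F A₀ n 0 h0 x * Ecoef F A₀ n 0 h0 y := by
  induction x using TensorProduct.induction_on with
  | zero => rw [tzero_mul, map_zero, zero_mul]
  | tmul a p =>
    induction y using TensorProduct.induction_on with
    | zero => rw [tmul_zero, map_zero, mul_zero]
    | tmul b q =>
      rw [Algebra.TensorProduct.tmul_mul_tmul, Ecoef_tmul, Ecoef_tmul, Ecoef_tmul,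
        coeffQ_mul_zero, smul_mul_smul_comm]
    | add y₁ y₂ h₁ h₂ => rw [tmul_add, map_add, map_add, mul_add, h₁, h₂]
  | add x₁ x₂ h₁ h₂ => rw [tadd_mul, map_add, map_add, add_mul, h₁, h₂]

lemma Ecoef_one_mul (n : ℕ) (h0 : 0 < n) (h1 : 1 < n)
    (x y : A₀ ⊗[F] (Polynomial F ⧸ Ideal.span {(X : Polynomial F) ^ n})) :
    Ecoef F A₀ n 1 h1 (x * y) =
      Ecoef F A₀ n 0 h0 x * Ecoef F A₀ n 1 h1 y + Ecoef F A₀ n 1 h1 x * Ecoef F A₀ n 0 h0 y := by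
  induction x using TensorProduct.induction_on with
  | zero => rw [tzero_mul, map_zero, map_zero, zero_mul, zero_mul, add_zero]
  | tmul a p =>
    induction y using TensorProduct.induction_on with
    | zero => rw [tmul_zero, map_zero, map_zero, mul_zero, mul_zero, add_zero]
    | tmul b q =>
      rw [Algebra.TensorProduct.tmul_mul_tmul, Ecoef_tmul, Ecoef_tmul, Ecoef_tmul, Ecoef_tmul,
        Ecoef_tmul, coeffQ_mul_one F n h0 h1, add_smul, smul_mul_smul_comm, smul_mul_smul_comm]
    | add y₁ y₂ h₁ h₂ =>
      rw [tmul_add, map_add, map_add, map_add, h₁, h₂, mul_add, mul_add]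
      abel
  | add x₁ x₂ h₁ h₂ =>
    rw [tadd_mul, map_add, map_add, map_add, h₁, h₂, add_mul, add_mul]
    abel

lemma Ecoef_one (n : ℕ) (h0 : 0 < n) :
    Ecoef F A₀ n 0 h0 (1 : A₀ ⊗[F] (Polynomial F ⧸ Ideal.span {(X : Polynomial F) ^ n})) = 1 := by
  rw [Algebra.TensorProduct.one_def, Ecoef_tmul,
    show (1 : Polynomial F ⧸ Ideal.span {(X : Polynomial F) ^ n}) =
      Ideal.Quotient.mk _ 1 from (map_one _).symm, coeffQ_mk]
  simp

lemma Ecoef_one' (n : ℕ) (h1 : 1 < n) :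
    Ecoef F A₀ n 1 h1 (1 : A₀ ⊗[F] (Polynomial F ⧸ Ideal.span {(X : Polynomial F) ^ n})) = 0 := by
  rw [Algebra.TensorProduct.one_def, Ecoef_tmul,
    show (1 : Polynomial F ⧸ Ideal.span {(X : Polynomial F) ^ n}) =
      Ideal.Quotient.mk _ 1 from (map_one _).symm, coeffQ_mk]
  simp [Polynomial.coeff_one]

lemma Ecoef_tmul_X (n : ℕ) (h1 : 1 < n) (a : A₀) :
    Ecoef F A₀ n 1 h1 (a ⊗ₜ[F] (Ideal.Quotient.mk (Ideal.span {(X : Polynomial F) ^ n}) X)) = a := by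
  rw [Ecoef_tmul, coeffQ_mk, Polynomial.coeff_X_one, one_smul]

end TensorNilpotentAux

open TensorProduct in
theorem tensor_nilpotent_not_two_sided_zpd (F A₀ : Type*) [Field F] [Ring A₀]
    [Algebra F A₀]
    (hA₀ : Submodule.span F {a : A₀ | a * a = 0} ≠ ⊤) (n : ℕ) (hn : 2 ≤ n) :
    ¬ Is2Zpd F (A₀ ⊗[F] (Polynomial F ⧸ Ideal.span {(Polynomial.X : Polynomial F) ^ n})) := by
  intro h2
  set S := Submodule.span F {a : A₀ | a * a = 0} with hS
  have h0 : 0 < n := by omega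
  have h1 : 1 < n := by omega
  -- a functional on A₀ vanishing on square-zero elements but not identically zero
  obtain ⟨w, hw⟩ : ∃ w : A₀, w ∉ S := by
    by_contra hc
    push_neg at hc
    exact hA₀ (Submodule.eq_top_iff'.mpr hc)
  obtain ⟨g, hg⟩ : ∃ g : (A₀ ⧸ S) →ₗ[F] F, g (S.mkQ w) ≠ 0 := by
    by_contra hc
    push_neg at hc
    have : S.mkQ w = 0 := (Module.forall_dual_apply_eq_zero_iff F _).mp hc
    rw [Submodule.mkQ_apply, Submodule.Quotient.mk_eq_zero] at this
    exact hw this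
  set f : A₀ →ₗ[F] F := g ∘ₗ S.mkQ with hf
  have hfsq : ∀ z : A₀, z * z = 0 → f z = 0 := by
    intro z hz
    have hzS : z ∈ S := Submodule.subset_span hz
    simp [hf, (Submodule.Quotient.mk_eq_zero S).mpr hzS]
  set E0 := TensorNilpotentAux.Ecoef F A₀ n 0 h0 with hE0
  set E1 := TensorNilpotentAux.Ecoef F A₀ n 1 h1 with hE1
  -- the bilinear functional
  set Φ := ((LinearMap.mul F A₀).compr₂ f).compl₁₂ E1 E0 with hΦ
  have hΦ_apply : ∀ x y, Φ x y = f (E1 x * E0 y) := fun x y => rfl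
  -- Φ vanishes on two-sided zero products
  have hvan : ∀ x y, x * y = 0 → y * x = 0 → Φ x y = 0 := by
    intro x y hxy hyx
    have h00 : E0 x * E0 y = 0 := by
      rw [hE0, ← TensorNilpotentAux.Ecoef_zero_mul, hxy, map_zero]
    have h10 : E0 y * E1 x + E1 y * E0 x = 0 := by
      rw [hE0, hE1, ← TensorNilpotentAux.Ecoef_one_mul, hyx, map_zero]
    have hneg : E0 y * E1 x = -(E1 y * E0 x) := by
      rw [eq_neg_iff_add_eq_zero]
      exact h10
    have hsq : (E1 x * E0 y) * (E1 x * E0 y) = 0 := by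
      calc (E1 x * E0 y) * (E1 x * E0 y) = E1 x * (E0 y * E1 x) * E0 y := by noncomm_ring
        _ = E1 x * (-(E1 y * E0 x)) * E0 y := by rw [hneg]
        _ = -(E1 x * E1 y * (E0 x * E0 y)) := by noncomm_ring
        _ = 0 := by rw [h00, mul_zero, neg_zero]
    rw [hΦ_apply]
    exact hfsq _ hsq
  -- apply the 2-zpd hypothesis
  obtain ⟨τ₁, τ₂, hτ⟩ := h2 Φ hvan
  have hτ' : ∀ x y, Φ x y = τ₁ (x * y) + τ₂ (y * x) := fun x y => hτ x y
  have hone : ∀ x, τ₁ x + τ₂ x = 0 := by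
    intro x
    have h := hτ' 1 x
    rw [TensorNilpotentAux.tone_mul, TensorNilpotentAux.tmul_one, hΦ_apply, hE1,
      TensorNilpotentAux.Ecoef_one', zero_mul, map_zero] at h
    exact h.symm
  have hfzero : ∀ a : A₀, f a = 0 := by
    intro a
    have h := hτ' (a ⊗ₜ[F] (Ideal.Quotient.mk _ Polynomial.X)) 1
    rw [TensorNilpotentAux.tone_mul, TensorNilpotentAux.tmul_one, hΦ_apply, hone, hE1, hE0,
      TensorNilpotentAux.Ecoef_tmul_X, TensorNilpotentAux.Ecoef_one, mul_one] at h
    exact h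
  exact hg (hfzero w)
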